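/- Let x, y, z be purely imaginary unit quaternions lying on a common great circle of the unit 2-sphere of imaginary quaternions. Then there exists a unit quaternion w such that w x w̄ = i, w z w̄ = e^{γk} i with γ ∈ [0, π], and w y w̄ = e^{θk} i with θ ∈ [0, 2π); moreover γ equals the angle between x and z, and θ equals the angle of x and y relative to z. -/

import Mathlib

open Real

noncomputable section

/-- The purely imaginary unit quaternion `i`. -/
def qi : Quaternion ℝ := ⟨0, 1, 0, 0⟩

/-- `e^{γk} i = cos γ · i + sin γ · j`. -/
def ekx (γ : ℝ) : Quaternion ℝ := ⟨0, Real.cos γ, Real.sin γ, 0⟩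

/-- Euclidean dot product of quaternions viewed as vectors in `ℝ⁴`. -/
def qdot (x y : Quaternion ℝ) : ℝ :=
  x.re * y.re + x.imI * y.imI + x.imJ * y.imJ + x.imK * y.imK

/-- The angle between two unit quaternions. -/
def ang (x y : Quaternion ℝ) : ℝ := Real.arccos (qdot x y)

open Classical in
/-- The angle of `x` and `y` relative to `z`, for `x, y, z` on a common great circle. -/
def rang (x y z : Quaternion ℝ) : ℝ :=
  if ang x z + ang z y = ang x y ∨ ang x z - ang z y = ang x y then ang x y
  else 2 * π - ang x y

namespace Stmt4Aux
open Quaternion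

def qk : Quaternion ℝ := ⟨0,0,0,1⟩

@[simp] lemma qi_re : qi.re = 0 := rfl
@[simp] lemma qi_imI : qi.imI = 1 := rfl
@[simp] lemma qi_imJ : qi.imJ = 0 := rfl
@[simp] lemma qi_imK : qi.imK = 0 := rfl
@[simp] lemma qk_re : qk.re = 0 := rfl
@[simp] lemma qk_imI : qk.imI = 0 := rfl
@[simp] lemma qk_imJ : qk.imJ = 0 := rfl
@[simp] lemma qk_imK : qk.imK = 1 := rfl
def qj : Quaternion ℝ := ⟨0, 0, 1, 0⟩
@[simp] lemma qj_re : qj.re = 0 := rfl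
@[simp] lemma qj_imI : qj.imI = 0 := rfl
@[simp] lemma qj_imJ : qj.imJ = 1 := rfl
@[simp] lemma qj_imK : qj.imK = 0 := rfl
@[simp] lemma ekx_re (t : ℝ) : (ekx t).re = 0 := rfl
@[simp] lemma ekx_imI (t : ℝ) : (ekx t).imI = Real.cos t := rfl
@[simp] lemma ekx_imJ (t : ℝ) : (ekx t).imJ = Real.sin t := rfl
@[simp] lemma ekx_imK (t : ℝ) : (ekx t).imK = 0 := rfl

lemma qdot_conj (w a b : Quaternion ℝ) :
    qdot (w*a*star w) (w*b*star w) = (normSq w)^2 * qdot a b := by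
  simp only [qdot, Quaternion.re_mul, Quaternion.imI_mul, Quaternion.imJ_mul, Quaternion.imK_mul,
    Quaternion.re_star, Quaternion.imI_star, Quaternion.imJ_star, Quaternion.imK_star,
    Quaternion.normSq_def']
  ring

lemma qdot_conj1 (w a b : Quaternion ℝ) (hw : normSq w = 1) :
    qdot (w*a*star w) (w*b*star w) = qdot a b := by
  rw [qdot_conj, hw]; ring

lemma re_conj (w a : Quaternion ℝ) : (w*a*star w).re = normSq w * a.re := by
  simp only [Quaternion.re_mul, Quaternion.imI_mul, Quaternion.imJ_mul, Quaternion.imK_mul,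
    Quaternion.re_star, Quaternion.imI_star, Quaternion.imJ_star, Quaternion.imK_star,
    Quaternion.normSq_def']
  ring

lemma normSq_conj (w a : Quaternion ℝ) : normSq (w*a*star w) = (normSq w)^2 * normSq a := by
  rw [map_mul, map_mul, normSq_star]; ring

lemma pure_sq (a : Quaternion ℝ) (h0 : a.re = 0) (h1 : normSq a = 1) : a * a = -1 := by
  have hd := Quaternion.normSq_def' a
  rw [h1, h0] at hd
  ext <;> simp [Quaternion.re_mul, Quaternion.imI_mul, Quaternion.imJ_mul, Quaternion.imK_mul, h0] <;>
    nlinarith [hd]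

lemma qdot_smul_left (c : ℝ) (a b : Quaternion ℝ) : qdot (c • a) b = c * qdot a b := by
  simp [qdot]; ring

lemma qdot_comm (a b : Quaternion ℝ) : qdot a b = qdot b a := by simp [qdot]; ring

lemma qdot_qi (a : Quaternion ℝ) : qdot a qi = a.imI := by simp [qdot]

lemma qdot_qk (a : Quaternion ℝ) : qdot a qk = a.imK := by simp [qdot]

lemma normSq_one_of (q : Quaternion ℝ) (h : ‖q‖ = 1) : normSq q = 1 := by
  rw [Quaternion.normSq_eq_norm_mul_self, h, one_mul]

lemma norm_one_of (q : Quaternion ℝ) (h : normSq q = 1) : ‖q‖ = 1 := by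
  have := Quaternion.normSq_eq_norm_mul_self q
  nlinarith [norm_nonneg q]

lemma inv_eq_star (q : Quaternion ℝ) (h : normSq q = 1) : q⁻¹ = star q := by
  rw [Quaternion.inv_def, h, inv_one, one_smul]

lemma mul_star_self_one (q : Quaternion ℝ) (h : normSq q = 1) : q * star q = 1 := by
  rw [Quaternion.self_mul_star, h, Quaternion.coe_one]

lemma star_mul_self_one (q : Quaternion ℝ) (h : normSq q = 1) : star q * q = 1 := by
  rw [Quaternion.star_mul_self, h, Quaternion.coe_one]

/-- normalization -/
lemma exists_unit (q : Quaternion ℝ) (hq : q ≠ 0) :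
    ∃ (u : Quaternion ℝ) (c : ℝ), c ≠ 0 ∧ u = c • q ∧ normSq u = 1 := by
  refine ⟨‖q‖⁻¹ • q, ‖q‖⁻¹, ?_, rfl, ?_⟩
  · simpa using norm_ne_zero_iff.2 hq
  · have h : ‖(‖q‖⁻¹ • q)‖ = 1 := by
      rw [norm_smul, norm_inv, norm_norm, inv_mul_cancel₀ (norm_ne_zero_iff.2 hq)]
    rw [Quaternion.normSq_eq_norm_mul_self, h, one_mul]

/-- Step 1: conjugating a pure unit quaternion to `qi`. -/
lemma step1 (x : Quaternion ℝ) (hre : x.re = 0) (hns : normSq x = 1) :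
    ∃ u : Quaternion ℝ, normSq u = 1 ∧ u * x = qi * u := by
  have hqiqi : qi * qi = -1 := by
    apply pure_sq <;> simp [Quaternion.normSq_def']
  have hxx : x * x = -1 := pure_sq x hre hns
  by_cases hxi : x = -qi
  · refine ⟨qj, ?_, ?_⟩
    · simp [Quaternion.normSq_def']
    · subst hxi
      ext <;> simp [Quaternion.re_mul, Quaternion.imI_mul, Quaternion.imJ_mul, Quaternion.imK_mul]
  · set q : Quaternion ℝ := 1 - qi * x with hqdef
    have hqre : q.re = 1 + x.imI := by
      simp [hqdef, Quaternion.re_mul, hre]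
    have hd := Quaternion.normSq_def' x
    rw [hns, hre] at hd
    have hI : -1 < x.imI := by
      rcases lt_or_eq_of_le (show -1 ≤ x.imI by nlinarith) with h | h
      · exact h
      · exfalso
        apply hxi
        have hJ : x.imJ = 0 := by nlinarith
        have hK : x.imK = 0 := by nlinarith
        ext <;> simp [hre, ← h, hJ, hK]
    have hq0 : q ≠ 0 := by
      intro h
      rw [h] at hqre
      simp at hqre
      linarith
    have hint : q * x = qi * q := by
      have h1 : q * x = x + qi := by
        rw [hqdef, sub_mul, one_mul, mul_assoc, hxx, mul_neg_one, sub_neg_eq_add]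
      have h2 : qi * q = qi + x := by
        rw [hqdef, mul_sub, mul_one, ← mul_assoc, hqiqi, neg_one_mul, sub_neg_eq_add]
      rw [h1, h2, add_comm]
    obtain ⟨u, c, hc, hu, hns'⟩ := exists_unit q hq0
    refine ⟨u, hns', ?_⟩
    rw [hu, smul_mul_assoc, hint, mul_smul_comm]

/-- Step 2: conjugating a pure unit quaternion orthogonal to `qi` to `±qk`,
fixing `qi`. -/
lemma step2 (m : Quaternion ℝ) (hre : m.re = 0) (hI : m.imI = 0) (hns : normSq m = 1) :
    ∃ (u : Quaternion ℝ) (ε : ℝ), normSq u = 1 ∧ (ε = 1 ∨ ε = -1) ∧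
      u * m = ε • (qk * u) ∧ u * qi = qi * u := by
  have hkk : qk * qk = -1 := by
    apply pure_sq <;> simp [Quaternion.normSq_def']
  have hmm : m * m = -1 := pure_sq m hre hns
  by_cases hmk : m = -qk
  · refine ⟨1, -1, by simp, Or.inr rfl, ?_, by simp⟩
    subst hmk
    ext <;> simp
  · set q : Quaternion ℝ := 1 - qk * m with hqdef
    have hqre : q.re = 1 + m.imK := by
      simp [hqdef, Quaternion.re_mul, hre, hI]
    have hd := Quaternion.normSq_def' m
    rw [hns, hre, hI] at hd
    have hK : -1 < m.imK := by
      rcases lt_or_eq_of_le (show -1 ≤ m.imK by nlinarith) with h | h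
      · exact h
      · exfalso
        apply hmk
        have hJ : m.imJ = 0 := by nlinarith
        ext <;> simp [hre, hI, ← h, hJ]
    have hq0 : q ≠ 0 := by
      intro h
      rw [h] at hqre
      simp at hqre
      linarith
    have hint : q * m = qk * q := by
      have h1 : q * m = m + qk := by
        rw [hqdef, sub_mul, one_mul, mul_assoc, hmm, mul_neg_one, sub_neg_eq_add]
      have h2 : qk * q = qk + m := by
        rw [hqdef, mul_sub, mul_one, ← mul_assoc, hkk, neg_one_mul, sub_neg_eq_add]
      rw [h1, h2, add_comm]
    have hcomm : q * qi = qi * q := by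
      ext <;>
        simp [hqdef, Quaternion.re_mul, Quaternion.imI_mul, Quaternion.imJ_mul,
          Quaternion.imK_mul, hre, hI]
    obtain ⟨u, c, hc, hu, hns'⟩ := exists_unit q hq0
    refine ⟨u, 1, hns', Or.inl rfl, ?_, ?_⟩
    · rw [one_smul, hu, smul_mul_assoc, hint, mul_smul_comm]
    · rw [hu, smul_mul_assoc, hcomm, mul_smul_comm]

/-- conjugation by qi flips the J and K components -/
lemma qi_conj (a : Quaternion ℝ) :
    qi * a * star qi = ⟨a.re, a.imI, -a.imJ, -a.imK⟩ := by
  ext <;>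
    simp [Quaternion.re_mul, Quaternion.imI_mul, Quaternion.imJ_mul, Quaternion.imK_mul]

lemma conj_eq (V a b : Quaternion ℝ) (hV : normSq V = 1) (rel : V * a = b * V) :
    V * a * star V = b := by
  rw [rel, mul_assoc, mul_star_self_one V hV, mul_one]

lemma conj_eq_smul (V a b : Quaternion ℝ) (ε : ℝ) (hV : normSq V = 1)
    (rel : V * a = ε • (b * V)) : V * a * star V = ε • b := by
  rw [rel, smul_mul_assoc, mul_assoc, mul_star_self_one V hV, mul_one]

open Classical in
lemma trig (γ θ : ℝ) (hγ0 : 0 ≤ γ) (hγπ : γ ≤ π) (hθ0 : 0 ≤ θ) (hθ2 : θ < 2*π)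
    (hbig : π < θ → 0 < Real.sin γ) :
    θ = if γ + Real.arccos (Real.cos (γ - θ)) = Real.arccos (Real.cos θ) ∨
          γ - Real.arccos (Real.cos (γ - θ)) = Real.arccos (Real.cos θ)
        then Real.arccos (Real.cos θ) else 2*π - Real.arccos (Real.cos θ) := by
  rcases le_or_gt θ π with hθπ | hθπ
  · have hA : Real.arccos (Real.cos θ) = θ := Real.arccos_cos hθ0 hθπ
    rcases le_total γ θ with h1 | h1
    · have hB : Real.arccos (Real.cos (γ - θ)) = θ - γ := by
        rw [show γ - θ = -(θ - γ) by ring, Real.cos_neg]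
        exact Real.arccos_cos (by linarith) (by linarith)
      rw [if_pos (Or.inl (by rw [hB, hA]; ring)), hA]
    · have hB : Real.arccos (Real.cos (γ - θ)) = γ - θ :=
        Real.arccos_cos (by linarith) (by linarith)
      rw [if_pos (Or.inr (by rw [hB, hA]; ring)), hA]
  · have hsin := hbig hθπ
    have hγ0' : 0 < γ := by
      rcases hγ0.lt_or_eq with h | h
      · exact h
      · exfalso; rw [← h, Real.sin_zero] at hsin; linarith
    have hγπ' : γ < π := by
      rcases hγπ.lt_or_eq with h | h
      · exact h
      · exfalso; rw [h, Real.sin_pi] at hsin; linarith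
    have hA : Real.arccos (Real.cos θ) = 2*π - θ := by
      rw [← Real.cos_two_pi_sub θ]
      exact Real.arccos_cos (by linarith) (by linarith)
    have hcond : ¬(γ + Real.arccos (Real.cos (γ - θ)) = Real.arccos (Real.cos θ) ∨
          γ - Real.arccos (Real.cos (γ - θ)) = Real.arccos (Real.cos θ)) := by
      rcases le_or_gt (θ - γ) π with h1 | h1
      · have hB : Real.arccos (Real.cos (γ - θ)) = θ - γ := by
          rw [show γ - θ = -(θ - γ) by ring, Real.cos_neg]
          exact Real.arccos_cos (by linarith) h1
        rw [hB, hA]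
        push_neg
        constructor <;> intro h <;> linarith
      · have hB : Real.arccos (Real.cos (γ - θ)) = 2*π - (θ - γ) := by
          rw [show Real.cos (γ - θ) = Real.cos (2*π - (θ - γ)) by
            rw [Real.cos_two_pi_sub, show γ - θ = -(θ - γ) by ring, Real.cos_neg]]
          exact Real.arccos_cos (by linarith) (by linarith)
        rw [hB, hA]
        push_neg
        constructor <;> intro h <;> linarith
    rw [if_neg hcond, hA]
    ring

end Stmt4Aux
namespace Stmt4Aux
lemma aux_sq (u v : ℝ) (h : (1:ℝ) = 0^2 + u^2 + v^2 + 0^2) : u^2 + v^2 = 1 := by nlinarith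
lemma aux_bd (u v : ℝ) (h : u^2 + v^2 = 1) : -1 ≤ u ∧ u ≤ 1 := by
  constructor <;> nlinarith [sq_nonneg (u+1), sq_nonneg (u-1), sq_nonneg v]
lemma aux_lt (u v : ℝ) (h : u^2 + v^2 = 1) (hv : v < 0) : -1 < u ∧ u < 1 := by
  constructor <;> nlinarith [sq_nonneg (u+1), sq_nonneg (u-1)]
end Stmt4Aux

namespace Stmt4Aux
open Quaternion in
set_option maxHeartbeats 2000000 in
theorem main (x y z : Quaternion ℝ)
    (hxre : x.re = 0) (hyre : y.re = 0) (hzre : z.re = 0)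
    (hx : ‖x‖ = 1) (hy : ‖y‖ = 1) (hz : ‖z‖ = 1)
    (hplane : ∃ n : Quaternion ℝ, n ≠ 0 ∧ n.re = 0 ∧
      qdot n x = 0 ∧ qdot n y = 0 ∧ qdot n z = 0) :
    ∃ w : Quaternion ℝ, ‖w‖ = 1 ∧ ∃ γ θ : ℝ,
      γ ∈ Set.Icc 0 π ∧ θ ∈ Set.Ico 0 (2 * π) ∧
      w * x * w⁻¹ = qi ∧ w * z * w⁻¹ = ekx γ ∧ w * y * w⁻¹ = ekx θ ∧
      γ = ang x z ∧ θ = rang x y z := by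
  classical
  obtain ⟨n, hn0, hnre, hnx, hny, hnz⟩ := hplane
  have hxns : normSq x = 1 := normSq_one_of x hx
  have hyns : normSq y = 1 := normSq_one_of y hy
  have hzns : normSq z = 1 := normSq_one_of z hz
  -- normalized normal vector
  obtain ⟨N, c, hc, hNdef, hNns⟩ := exists_unit n hn0
  have hNre : N.re = 0 := by rw [hNdef]; simp [hnre]
  have hNx : qdot N x = 0 := by rw [hNdef, qdot_smul_left, hnx, mul_zero]
  have hNy : qdot N y = 0 := by rw [hNdef, qdot_smul_left, hny, mul_zero]
  have hNz : qdot N z = 0 := by rw [hNdef, qdot_smul_left, hnz, mul_zero]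
  -- step 1
  obtain ⟨u₁, hu₁, h1x⟩ := step1 x hxre hxns
  set m : Quaternion ℝ := u₁ * N * star u₁ with hmdef
  have hm_re : m.re = 0 := by rw [hmdef, re_conj, hNre, mul_zero]
  have hm_ns : normSq m = 1 := by rw [hmdef, normSq_conj, hu₁, hNns]; norm_num
  have hqiconj : u₁ * x * star u₁ = qi := conj_eq u₁ x qi hu₁ h1x
  have hm_I : m.imI = 0 := by
    have h := qdot_conj1 u₁ N x hu₁
    rw [hqiconj] at h
    rw [← qdot_qi m, hmdef, h, hNx]
  -- step 2
  obtain ⟨u₂, ε, hu₂, hε, h2m, h2comm⟩ := step2 m hm_re hm_I hm_ns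
  set U : Quaternion ℝ := u₂ * u₁ with hUdef
  have hUns : normSq U = 1 := by rw [hUdef, map_mul, hu₂, hu₁, mul_one]
  have hUx : U * x = qi * U := by
    rw [hUdef, mul_assoc, h1x, ← mul_assoc, h2comm, mul_assoc]
  have hm_int : m * u₁ = u₁ * N := by
    rw [hmdef, mul_assoc, star_mul_self_one u₁ hu₁, mul_one]
  have hUN : U * N = ε • (qk * U) := by
    rw [hUdef, mul_assoc, ← hm_int, ← mul_assoc, h2m, smul_mul_assoc, mul_assoc]
  have hqins : normSq qi = 1 := by simp [Quaternion.normSq_def']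
  -- choose orientation
  obtain ⟨V, ε', hε', hVns, hVx, hVN, hZJ0, hZJY⟩ :
      ∃ (V : Quaternion ℝ) (ε' : ℝ), (ε' = 1 ∨ ε' = -1) ∧ normSq V = 1 ∧
        V * x = qi * V ∧ V * N = ε' • (qk * V) ∧
        0 ≤ (V * z * star V).imJ ∧
        ((V * z * star V).imJ = 0 → 0 ≤ (V * y * star V).imJ) := by
    by_cases hch : 0 < (U * z * star U).imJ ∨
        ((U * z * star U).imJ = 0 ∧ 0 ≤ (U * y * star U).imJ)
    · refine ⟨U, ε, hε, hUns, hUx, hUN, ?_, ?_⟩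
      · rcases hch with h | ⟨h, _⟩
        · exact le_of_lt h
        · exact le_of_eq h.symm
      · intro hJ
        rcases hch with h | ⟨_, h⟩
        · exact absurd hJ (ne_of_gt h)
        · exact h
    · push_neg at hch
      obtain ⟨hch1, hch2⟩ := hch
      refine ⟨qi * U, -ε, ?_, ?_, ?_, ?_, ?_, ?_⟩
      · rcases hε with h | h
        · exact Or.inr (by rw [h])
        · exact Or.inl (by rw [h]; norm_num)
      · rw [map_mul, hqins, hUns, mul_one]
      · rw [mul_assoc, hUx, ← mul_assoc]
      · have hik : qi * qk = -(qk * qi) := by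
          ext <;> simp [Quaternion.re_mul, Quaternion.imI_mul, Quaternion.imJ_mul,
            Quaternion.imK_mul]
        rw [mul_assoc, hUN, mul_smul_comm, ← mul_assoc, hik]
        simp only [neg_mul, smul_neg, neg_smul, mul_assoc]
      · have hflip : qi * U * z * star (qi * U) = qi * (U * z * star U) * star qi := by
          rw [star_mul]
          simp only [mul_assoc]
        rw [hflip, qi_conj]
        show (0:ℝ) ≤ -(U * z * star U).imJ
        linarith
      · intro hJ
        have hflip : ∀ a : Quaternion ℝ,
            qi * U * a * star (qi * U) = qi * (U * a * star U) * star qi := by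
          intro a
          rw [star_mul]
          simp only [mul_assoc]
        rw [hflip z, qi_conj] at hJ
        rw [hflip y, qi_conj]
        have hz0 : (U * z * star U).imJ = 0 := by
          have h' : -(U * z * star U).imJ = 0 := hJ
          linarith
        have h'' := hch2 hz0
        show (0:ℝ) ≤ -(U * y * star U).imJ
        linarith
  have hε'0 : ε' ≠ 0 := by rcases hε' with h | h <;> rw [h] <;> norm_num
  have hVqi : V * x * star V = qi := conj_eq V x qi hVns hVx
  have hVqk : V * N * star V = ε' • qk := conj_eq_smul V N qk ε' hVns hVN
  set Z : Quaternion ℝ := V * z * star V with hZdef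
  set Y : Quaternion ℝ := V * y * star V with hYdef
  -- properties of Z and Y
  have hZre : Z.re = 0 := by rw [hZdef, re_conj, hzre, mul_zero]
  have hYre : Y.re = 0 := by rw [hYdef, re_conj, hyre, mul_zero]
  have hZns : normSq Z = 1 := by rw [hZdef, normSq_conj, hVns, hzns]; norm_num
  have hYns : normSq Y = 1 := by rw [hYdef, normSq_conj, hVns, hyns]; norm_num
  have hsmulk : ∀ a : Quaternion ℝ, qdot a (ε' • qk) = ε' * a.imK := by
    intro a
    simp only [qdot, Quaternion.re_smul, Quaternion.imI_smul, Quaternion.imJ_smul,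
      Quaternion.imK_smul, qk_re, qk_imI, qk_imJ, qk_imK, smul_eq_mul]
    ring
  have hZK : Z.imK = 0 := by
    have h := qdot_conj1 V z N hVns
    rw [hVqk, qdot_comm z N, hNz, hsmulk] at h
    show (V * z * star V).imK = 0
    rcases mul_eq_zero.1 h with h | h
    · exact absurd h hε'0
    · exact h
  have hYK : Y.imK = 0 := by
    have h := qdot_conj1 V y N hVns
    rw [hVqk, qdot_comm y N, hNy, hsmulk] at h
    show (V * y * star V).imK = 0
    rcases mul_eq_zero.1 h with h | h
    · exact absurd h hε'0
    · exact h
  have hZI : Z.imI = qdot x z := by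
    have h := qdot_conj1 V z x hVns
    rw [hVqi] at h
    show (V * z * star V).imI = qdot x z
    rw [← qdot_qi (V * z * star V), h, qdot_comm]
  have hYI : Y.imI = qdot x y := by
    have h := qdot_conj1 V y x hVns
    rw [hVqi] at h
    show (V * y * star V).imI = qdot x y
    rw [← qdot_qi (V * y * star V), h, qdot_comm]
  have hZY : qdot Z Y = qdot z y := by
    rw [hZdef, hYdef]; exact qdot_conj1 V z y hVns
  clear_value Z Y
  have hZd : Z.imI^2 + Z.imJ^2 = 1 := by
    have h := Quaternion.normSq_def' Z
    rw [hZns, hZre, hZK] at h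
    exact aux_sq _ _ h
  have hYd : Y.imI^2 + Y.imJ^2 = 1 := by
    have h := Quaternion.normSq_def' Y
    rw [hYns, hYre, hYK] at h
    exact aux_sq _ _ h
  -- define γ
  set γ : ℝ := Real.arccos Z.imI with hγdef
  have hZI1 : -1 ≤ Z.imI := (aux_bd _ _ hZd).1
  have hZI2 : Z.imI ≤ 1 := (aux_bd _ _ hZd).2
  have hcosγ : Real.cos γ = Z.imI := Real.cos_arccos hZI1 hZI2
  have hsinγ : Real.sin γ = Z.imJ := by
    rw [hγdef, Real.sin_arccos, show 1 - Z.imI^2 = Z.imJ^2 by linarith]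
    rw [Real.sqrt_sq_eq_abs]
    exact abs_of_nonneg hZJ0
  clear_value γ
  have hZekx : ekx γ = Z := by
    ext <;> simp [hcosγ, hsinγ, hZre, hZK]
  -- define θ
  have hYI1 : -1 ≤ Y.imI := (aux_bd _ _ hYd).1
  have hYI2 : Y.imI ≤ 1 := (aux_bd _ _ hYd).2
  obtain ⟨θ, hθ0, hθ2, hcosθ, hsinθ, hbig⟩ :
      ∃ θ : ℝ, 0 ≤ θ ∧ θ < 2*π ∧ Real.cos θ = Y.imI ∧ Real.sin θ = Y.imJ ∧
        (π < θ → 0 < Real.sin γ) := by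
    by_cases hYJ : 0 ≤ Y.imJ
    · refine ⟨Real.arccos Y.imI, Real.arccos_nonneg _, ?_, Real.cos_arccos hYI1 hYI2, ?_, ?_⟩
      · have := Real.arccos_le_pi Y.imI
        have := Real.pi_pos
        linarith
      · rw [Real.sin_arccos, show 1 - Y.imI^2 = Y.imJ^2 by linarith]
        rw [Real.sqrt_sq_eq_abs]
        exact abs_of_nonneg hYJ
      · intro h
        exact absurd h (not_lt.2 (Real.arccos_le_pi Y.imI))
    · have hYJ' : Y.imJ < 0 := lt_of_not_ge hYJ
      have hYI2' : Y.imI < 1 := (aux_lt _ _ hYd hYJ').2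
      have hYI1' : -1 < Y.imI := (aux_lt _ _ hYd hYJ').1
      have ha0 : 0 < Real.arccos Y.imI := Real.arccos_pos.2 hYI2'
      have haπ : Real.arccos Y.imI < π := by
        rcases lt_or_eq_of_le (Real.arccos_le_pi Y.imI) with h | h
        · exact h
        · exact absurd (Real.arccos_eq_pi.1 h) (not_le.2 hYI1')
      refine ⟨2*π - Real.arccos Y.imI, by linarith, by linarith, ?_, ?_, ?_⟩
      · rw [Real.cos_two_pi_sub]
        exact Real.cos_arccos hYI1 hYI2
      · rw [Real.sin_two_pi_sub, Real.sin_arccos,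
          show 1 - Y.imI^2 = Y.imJ^2 by linarith, Real.sqrt_sq_eq_abs, abs_of_neg hYJ']
        ring
      · intro _
        rw [hsinγ]
        rcases lt_or_eq_of_le hZJ0 with h | h
        · exact h
        · exact absurd (hZJY h.symm) (not_le.2 hYJ')
  have hYekx : ekx θ = Y := by
    ext <;> simp [hcosθ, hsinθ, hYre, hYK]
  -- finish
  have hwinv : V⁻¹ = star V := inv_eq_star V hVns
  have hγ0 : 0 ≤ γ := by rw [hγdef]; exact Real.arccos_nonneg _
  have hγπ : γ ≤ π := by rw [hγdef]; exact Real.arccos_le_pi _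
  have hangxz : ang x z = γ := by
    show Real.arccos (qdot x z) = γ
    rw [← hZI, ← hγdef]
  have hangxy : ang x y = Real.arccos (Real.cos θ) := by
    show Real.arccos (qdot x y) = _
    rw [← hYI, hcosθ]
  have hangzy : ang z y = Real.arccos (Real.cos (γ - θ)) := by
    show Real.arccos (qdot z y) = _
    rw [← hZY, Real.cos_sub, hcosγ, hcosθ, hsinγ, hsinθ]
    congr 1
    simp [qdot, hZre, hYre, hZK, hYK]
  refine ⟨V, norm_one_of V hVns, γ, θ,
    ⟨hγ0, hγπ⟩, ⟨hθ0, hθ2⟩, ?_, ?_, ?_, hangxz.symm, ?_⟩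
  · rw [hwinv]; exact hVqi
  · rw [hwinv, ← hZdef]; exact hZekx.symm
  · rw [hwinv, ← hYdef]; exact hYekx.symm
  · unfold rang
    rw [hangxz, hangxy, hangzy]
    exact trig γ θ hγ0 hγπ hθ0 hθ2 hbig

end Stmt4Aux

theorem stmt4 (x y z : Quaternion ℝ)
    (hxre : x.re = 0) (hyre : y.re = 0) (hzre : z.re = 0)
    (hx : ‖x‖ = 1) (hy : ‖y‖ = 1) (hz : ‖z‖ = 1)
    (hplane : ∃ n : Quaternion ℝ, n ≠ 0 ∧ n.re = 0 ∧
      qdot n x = 0 ∧ qdot n y = 0 ∧ qdot n z = 0) :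
    ∃ w : Quaternion ℝ, ‖w‖ = 1 ∧ ∃ γ θ : ℝ,
      γ ∈ Set.Icc 0 π ∧ θ ∈ Set.Ico 0 (2 * π) ∧
      w * x * w⁻¹ = qi ∧ w * z * w⁻¹ = ekx γ ∧ w * y * w⁻¹ = ekx θ ∧
      γ = ang x z ∧ θ = rang x y z :=
  Stmt4Aux.main x y z hxre hyre hzre hx hy hz hplane
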